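/- Let n, k, d ∈ ℕ with k ≤ 2^n, and let S ⊆ {0,1}^n be a contiguous set of size k that is disjoint from M(k), the set of k lexicographically smallest strings. Then the number of strings of Hamming weight ≤ d−1 in M(k) is at least the number of strings of Hamming weight ≤ d in S. -/

import Mathlib

/-- The value of a binary string of length `n`, first coordinate most significant.
Comparing values is exactly the lexicographic order on `{0,1}^n`. -/
def valB {n : ℕ} (x : Fin n → Fin 2) : ℕ := ∑ i, (x i : ℕ) * 2 ^ (n - 1 - (i : ℕ))

def pc : ℕ → ℕ
  | 0 => 0
  | (n+1) => pc ((n+1)/2) + (n+1) % 2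
decreasing_by exact Nat.div_lt_self (Nat.succ_pos n) one_lt_two

def cnt (a e d : ℕ) : ℕ := ((Finset.Ico a (a+e)).filter (fun v => pc v ≤ d)).card


lemma pc_div2 (v : ℕ) : pc v = pc (v/2) + v % 2 := by
  cases v with
  | zero => simp [pc]
  | succ n => rw [pc]

lemma pc_bit (m b : ℕ) (hb : b < 2) : pc (2*m + b) = pc m + b := by
  rw [pc_div2 (2*m+b)]
  have h1 : (2*m+b)/2 = m := by omega
  have h2 : (2*m+b)%2 = b := by omega
  rw [h1, h2]

lemma pc_eq_zero (v : ℕ) : pc v = 0 ↔ v = 0 := by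
  induction v using Nat.strong_induction_on with
  | _ v ih =>
    cases v with
    | zero => simp [pc]
    | succ n =>
      rw [pc_div2]
      constructor
      · intro h
        have h1 : pc ((n+1)/2) = 0 := by omega
        have h2 : (n+1) % 2 = 0 := by omega
        have := (ih ((n+1)/2) (by omega)).mp h1
        omega
      · omega

lemma pc_mul_pow_add : ∀ (n q r : ℕ), r < 2^n → pc (q * 2^n + r) = pc q + pc r := by
  intro n
  induction n with
  | zero => intro q r h; interval_cases r; simp [pc]
  | succ n ih =>
    intro q r h
    have hr : r = 2*(r/2) + r%2 := by omega
    have key : q * 2^(n+1) + r = 2*(q*2^n + r/2) + r%2 := by ring_nf; omega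
    rw [key, pc_bit _ _ (by omega), ih q (r/2) (by omega), pc_div2 r]
    ring

lemma pc_compl : ∀ (n v : ℕ), v < 2^n → pc v + pc (2^n - 1 - v) = n := by
  intro n
  induction n with
  | zero => intro v h; interval_cases v; simp [pc]
  | succ n ih =>
    intro v h
    have h2 : (2:ℕ)^(n+1) = 2*2^n := by ring
    have hm : v/2 < 2^n := by omega
    have key : 2^(n+1) - 1 - v = 2*(2^n - 1 - v/2) + (1 - v % 2) := by omega
    rw [key, pc_bit _ _ (by omega), pc_div2 v]
    have := ih (v/2) hm
    omega

lemma pc_le (n v : ℕ) (h : v < 2^n) : pc v ≤ n := by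
  have := pc_compl n v h; omega

lemma cnt_e_zero (a d : ℕ) : cnt a 0 d = 0 := by simp [cnt]

lemma cnt_le (a e d : ℕ) : cnt a e d ≤ e := by
  have := Finset.card_filter_le (Finset.Ico a (a+e)) (fun v => pc v ≤ d)
  simpa [cnt] using this

lemma cnt_split (a e1 e2 d : ℕ) : cnt a (e1+e2) d = cnt a e1 d + cnt (a+e1) e2 d := by
  unfold cnt
  have h0 : a + (e1+e2) = (a+e1)+e2 := by ring
  rw [h0, ← Finset.Ico_union_Ico_eq_Ico (by omega : a ≤ a+e1) (by omega : a+e1 ≤ a+e1+e2),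
    Finset.filter_union, Finset.card_union_of_disjoint
      (Finset.disjoint_filter_filter (Finset.Ico_disjoint_Ico_consecutive a (a+e1) (a+e1+e2)))]

lemma cnt_mono_d (a e : ℕ) {d d' : ℕ} (h : d ≤ d') : cnt a e d ≤ cnt a e d' := by
  apply Finset.card_le_card
  intro v hv
  simp only [Finset.mem_filter] at hv ⊢
  exact ⟨hv.1, le_trans hv.2 h⟩

lemma cnt_d0 (a e : ℕ) (ha : 1 ≤ a) : cnt a e 0 = 0 := by
  rw [cnt, Finset.card_eq_zero, Finset.filter_eq_empty_iff]
  intro v hv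
  simp only [Finset.mem_Ico] at hv
  intro hpc
  have := (pc_eq_zero v).mp (by omega)
  omega

lemma cnt_full (n a e d : ℕ) (h : a + e ≤ 2^n) (hd : n ≤ d) : cnt a e d = e := by
  rw [cnt]
  rw [Finset.filter_true_of_mem, Nat.card_Ico]
  · omega
  · intro v hv
    simp only [Finset.mem_Ico] at hv
    exact le_trans (pc_le n v (by omega)) hd

lemma cnt_shift (t x e d : ℕ) (h : x + e ≤ 2^t) : cnt (2^t + x) e (d+1) = cnt x e d := by
  unfold cnt
  apply Finset.card_nbij' (i := fun v => v - 2^t) (j := fun u => 2^t + u)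
  · intro v hv
    simp only [Finset.mem_filter, Finset.mem_Ico, Finset.mem_coe] at hv ⊢
    obtain ⟨⟨h1, h2⟩, h3⟩ := hv
    have hv2 : v = 1 * 2^t + (v - 2^t) := by omega
    rw [hv2, pc_mul_pow_add t 1 (v - 2^t) (by omega)] at h3
    have hpc1 : pc 1 = 1 := by rw [pc_div2]; simp [pc]
    rw [hpc1] at h3
    exact ⟨⟨by omega, by omega⟩, by omega⟩
  · intro u hu
    simp only [Finset.mem_filter, Finset.mem_Ico, Finset.mem_coe] at hu ⊢
    obtain ⟨⟨h1, h2⟩, h3⟩ := hu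
    have : 2^t + u = 1 * 2^t + u := by ring
    rw [this, pc_mul_pow_add t 1 u (by omega)]
    have hpc1 : pc 1 = 1 := by rw [pc_div2]; simp [pc]
    rw [hpc1]
    exact ⟨⟨by omega, by omega⟩, by omega⟩
  · intro v hv
    simp only [Finset.mem_coe, Finset.mem_filter, Finset.mem_Ico] at hv
    dsimp only
    omega
  · intro u hu; dsimp only; omega

lemma cnt_compl (n a e d : ℕ) (h : a + e ≤ 2^n) (hd : d < n) :
    cnt a e d + cnt (2^n - (a+e)) e (n - d - 1) = e := by
  have hsplit := Finset.card_filter_add_card_filter_not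
    (s := Finset.Ico a (a+e)) (p := fun v => pc v ≤ d)
  simp only [Nat.card_Ico] at hsplit
  have hneg : ((Finset.Ico a (a+e)).filter (fun v => ¬ pc v ≤ d)).card
      = cnt (2^n - (a+e)) e (n - d - 1) := by
    unfold cnt
    apply Finset.card_nbij' (i := fun v => 2^n - 1 - v) (j := fun u => 2^n - 1 - u)
    · intro v hv
      simp only [Finset.mem_filter, Finset.mem_Ico, Finset.mem_coe] at hv ⊢
      obtain ⟨⟨h1, h2⟩, h3⟩ := hv
      have hc := pc_compl n v (by omega)
      exact ⟨⟨by omega, by omega⟩, by omega⟩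
    · intro u hu
      simp only [Finset.mem_filter, Finset.mem_Ico, Finset.mem_coe] at hu ⊢
      obtain ⟨⟨h1, h2⟩, h3⟩ := hu
      have hc := pc_compl n (2^n - 1 - u) (by omega)
      have he : 2^n - 1 - (2^n - 1 - u) = u := by omega
      rw [he] at hc
      exact ⟨⟨by omega, by omega⟩, by omega⟩
    · intro v hv
      simp only [Finset.mem_coe, Finset.mem_filter, Finset.mem_Ico] at hv
      dsimp only
      omega
    · intro u hu
      simp only [Finset.mem_coe, Finset.mem_filter, Finset.mem_Ico] at hu
      dsimp only
      omega
  rw [hneg] at hsplit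
  have : cnt a e d = ((Finset.Ico a (a+e)).filter (fun v => pc v ≤ d)).card := rfl
  omega

lemma cnt_suffix_of (n : ℕ) (hM : ∀ a e d, a + e ≤ 2^n → cnt a e d ≤ cnt 0 e d) :
    ∀ c e d, c + e ≤ 2^n → cnt (2^n - e) e d ≤ cnt c e d := by
  intro c e d h
  by_cases hd : n ≤ d
  · rw [cnt_full n _ e d (by omega) hd, cnt_full n c e d (by omega) hd]
  · push_neg at hd
    have h1 := cnt_compl n (2^n - e) e d (by omega) hd
    have h2 := cnt_compl n c e d (by omega) hd
    have h3 : 2^n - ((2^n - e) + e) = 0 := by omega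
    rw [h3] at h1
    have h4 := hM (2^n - (c+e)) e (n - d - 1) (by omega)
    omega

lemma cnt_le_prefix : ∀ (n : ℕ), ∀ a e d, a + e ≤ 2^n → cnt a e d ≤ cnt 0 e d := by
  intro n
  induction n with
  | zero =>
    intro a e d h
    rcases Nat.eq_zero_or_pos a with rfl | ha
    · exact le_refl _
    · have : e = 0 := by omega
      subst this; simp [cnt_e_zero]
  | succ n ih =>
    intro a e d h
    rcases Nat.eq_zero_or_pos a with rfl | ha
    · exact le_refl _
    by_cases h1 : a + e ≤ 2^n
    · exact ih a e d h1
    push_neg at h1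
    rcases d with _ | d'
    · rw [cnt_d0 a e ha]; exact Nat.zero_le _
    by_cases h2 : 2^n ≤ a
    · -- a = 2^n + x
      have hx : a = 2^n + (a - 2^n) := by omega
      rw [hx, cnt_shift n (a - 2^n) e d' (by omega)]
      exact le_trans (ih (a - 2^n) e d' (by omega)) (cnt_mono_d 0 e (by omega))
    push_neg at h2
    -- a < 2^n < a + e
    set hh := 2^n - a with hhdef
    set c := a + e - 2^n with hcdef
    have hsplitL : cnt a e (d'+1) = cnt a hh (d'+1) + cnt (2^n) c (d'+1) := by
      have he : e = hh + c := by omega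
      rw [he, cnt_split]
      congr 2
      omega
    by_cases h3 : e ≤ 2^n
    · -- easy crossing case
      have hR : cnt 0 e (d'+1) = cnt 0 c (d'+1) + cnt c hh (d'+1) := by
        have he : e = c + hh := by omega
        rw [he, cnt_split]
        simp
      have b1 : cnt (2^n) c (d'+1) ≤ cnt 0 c (d'+1) := by
        have : (2:ℕ)^n = 2^n + 0 := by ring
        rw [this, cnt_shift n 0 c d' (by omega)]
        exact cnt_mono_d 0 c (by omega)
      have b2 : cnt a hh (d'+1) ≤ cnt c hh (d'+1) := by
        have ha2 : a = 2^n - hh := by omega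
        rw [ha2]
        exact cnt_suffix_of n ih c hh (d'+1) (by omega)
      omega
    push_neg at h3
    -- e > 2^n
    set g := e - 2^n with hgdef
    have hcga : c = a + g := by omega
    have hc2 : c ≤ 2^n := by omega
    -- LHS second piece
    have p1 : cnt (2^n) c (d'+1) = cnt 0 g d' + cnt g a d' := by
      have : (2:ℕ)^n = 2^n + 0 := by ring
      rw [this, cnt_shift n 0 c d' (by omega)]
      have : c = g + a := by omega
      rw [this, cnt_split]
      simp
    -- RHS decomposition
    have hR : cnt 0 e (d'+1) = cnt 0 (2^n) (d'+1) + cnt 0 g d' := by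
      have he : e = 2^n + g := by omega
      rw [he, cnt_split 0 (2^n) g]
      have h9 : (0:ℕ) + 2^n = 2^n + 0 := by ring
      rw [h9, cnt_shift n 0 g d' (by omega)]
    have hR2 : cnt 0 (2^n) (d'+1)
        = cnt 0 g (d'+1) + cnt g a (d'+1) + cnt c (2^n - c) (d'+1) := by
      have he : (2:ℕ)^n = g + a + (2^n - c) := by omega
      conv_lhs => rw [he]
      rw [cnt_split 0 (g+a) (2^n - c), cnt_split 0 g a]
      have e1 : (0:ℕ) + g = g := by omega
      have e2 : (0:ℕ) + (g + a) = c := by omega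
      rw [e1, e2]
    have hL2 : cnt a hh (d'+1) = cnt a g (d'+1) + cnt c (2^n - c) (d'+1) := by
      have he : hh = g + (2^n - c) := by omega
      have e3 : a + g = c := by omega
      rw [he, cnt_split a g (2^n - c), e3]
    have b1 : cnt a g (d'+1) ≤ cnt 0 g (d'+1) := ih a g (d'+1) (by omega)
    have b2 : cnt g a d' ≤ cnt g a (d'+1) := cnt_mono_d g a (by omega)
    omega

lemma cnt_suffix (n : ℕ) : ∀ c e d, c + e ≤ 2^n → cnt (2^n - e) e d ≤ cnt c e d :=
  cnt_suffix_of n (cnt_le_prefix n)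

lemma TU : ∀ (n : ℕ),
    (∀ e c d, c + 2*e ≤ 2^n → cnt (2^n - e) e (d+1) ≤ cnt c e d) ∧
    (∀ a k d, k ≤ a → a + k ≤ 2^n → cnt a k (d+1) ≤ cnt 0 k d) := by
  intro n
  induction n with
  | zero =>
    constructor
    · intro e c d h
      have : e = 0 := by omega
      subst this; simp [cnt_e_zero]
    · intro a k d hka h
      have : k = 0 := by omega
      subst this; simp [cnt_e_zero]
  | succ n ih =>
    obtain ⟨ihU, ihT⟩ := ih
    have hpow : (2:ℕ)^(n+1) = 2^n + 2^n := by ring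
    constructor
    · -- U (n+1)
      intro e c d h
      rcases Nat.eq_zero_or_pos e with rfl | he
      · simp [cnt_e_zero]
      by_cases hee : e = 2^n
      · have hc0 : c = 0 := by omega
        subst hc0 hee
        have h9 : 2^(n+1) - 2^n = 2^n + 0 := by omega
        rw [h9, cnt_shift n 0 (2^n) d (by omega)]
      have helt : e < 2^n := by omega
      -- peel top bit
      have hstart : 2^(n+1) - e = 2^n + (2^n - e) := by omega
      rw [hstart, cnt_shift n (2^n - e) e d (by omega)]
      by_cases hce : c + e ≤ 2^n
      · exact cnt_suffix n c e d hce
      push_neg at hce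
      by_cases hc : 2^n ≤ c
      · -- target entirely in upper half
        rcases d with _ | d''
        · rw [cnt_d0 (2^n - e) e (by omega)]; exact Nat.zero_le _
        have hc9 : c = 2^n + (c - 2^n) := by omega
        rw [hc9, cnt_shift n (c - 2^n) e d'' (by omega)]
        exact ihU e (c - 2^n) d'' (by omega)
      push_neg at hc
      -- target crosses 2^n
      set g := c + e - 2^n with hgdef
      have hg1 : 1 ≤ g := by omega
      have hge : g ≤ e := by omega
      -- split LHS
      have hLs : cnt (2^n - e) e d
          = cnt (2^n - e) g d + cnt (2^n - (e - g)) (e-g) d := by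
        have h5 := cnt_split (2^n - e) g (e-g) d
        rw [show g + (e - g) = e from by omega,
            show 2^n - e + g = 2^n - (e - g) from by omega] at h5
        exact h5
      -- split RHS
      have hRs : cnt c e d = cnt c (2^n - c) d + cnt (2^n) g d := by
        have he9 : e = (2^n - c) + g := by omega
        conv_lhs => rw [he9]
        rw [cnt_split]
        have : c + (2^n - c) = 2^n := by omega
        rw [this]
      have b2 : cnt (2^n - (e - g)) (e-g) d ≤ cnt c (2^n - c) d := by
        have h9 : e - g = 2^n - c := by omega
        rw [h9]
        exact cnt_suffix n c (2^n - c) d (by omega)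
      have b1 : cnt (2^n - e) g d ≤ cnt (2^n) g d := by
        rcases d with _ | d''
        · rw [cnt_d0 (2^n - e) g (by omega)]; exact Nat.zero_le _
        have h9 : (2:ℕ)^n = 2^n + 0 := by ring
        conv_rhs => rw [h9]
        rw [cnt_shift n 0 g d'' (by omega)]
        exact ihT (2^n - e) g d'' (by omega) (by omega)
      omega
    · -- T (n+1)
      intro a k d hka h
      by_cases h1 : a + k ≤ 2^n
      · exact ihT a k d hka h1
      push_neg at h1
      by_cases h2 : 2^n ≤ a
      · have ha9 : a = 2^n + (a - 2^n) := by omega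
        rw [ha9, cnt_shift n (a - 2^n) k d (by omega)]
        exact cnt_le_prefix n (a - 2^n) k d (by omega)
      push_neg at h2
      -- crossing
      set c := a + k - 2^n with hcdef
      have hc1 : 1 ≤ c := by omega
      have hcle : c ≤ a := by omega
      have hLs : cnt a k (d+1) = cnt a (2^n - a) (d+1) + cnt 0 c d := by
        have hk9 : k = (2^n - a) + c := by omega
        conv_lhs => rw [hk9]
        rw [cnt_split]
        have h8 : a + (2^n - a) = 2^n + 0 := by omega
        rw [h8, cnt_shift n 0 c d (by omega)]
      have hRs : cnt 0 k d = cnt 0 c d + cnt c (2^n - a) d := by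
        have hk9 : k = c + (2^n - a) := by omega
        conv_lhs => rw [hk9]
        rw [cnt_split]
        have : (0:ℕ) + c = c := by omega
        rw [this]
      have b1 : cnt a (2^n - a) (d+1) ≤ cnt c (2^n - a) d := by
        have h5 := ihU (2^n - a) c d (by omega)
        rw [show 2^n - (2^n - a) = a from by omega] at h5
        exact h5
      omega

lemma Tmain (n a k d : ℕ) (hka : k ≤ a) (h : a + k ≤ 2^n) :
    cnt a k (d+1) ≤ cnt 0 k d := (TU n).2 a k d hka h

lemma pc_small (b : ℕ) (hb : b < 2) : pc b = b := by
  interval_cases b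
  · exact (pc_eq_zero 0).mpr rfl
  · rw [pc_div2]
    have h0 : (1:ℕ)/2 = 0 := by omega
    have h1 : (1:ℕ)%2 = 1 := by omega
    rw [h0, h1, (pc_eq_zero 0).mpr rfl]

lemma valB_succ (n : ℕ) (x : Fin (n+1) → Fin 2) :
    valB x = (x 0 : ℕ) * 2^n + valB (fun i : Fin n => x i.succ) := by
  unfold valB
  rw [Fin.sum_univ_succ]
  have h1 : ∀ i : Fin n, ((x i.succ : ℕ)) * 2 ^ (n + 1 - 1 - ((i.succ : Fin (n+1)) : ℕ))
      = ((x i.succ : ℕ)) * 2 ^ (n - 1 - (i : ℕ)) := by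
    intro i
    congr 2
    simp only [Fin.val_succ]
    omega
  rw [Finset.sum_congr rfl (fun i _ => h1 i)]
  norm_num

lemma valB_lt : ∀ (n : ℕ) (x : Fin n → Fin 2), valB x < 2^n := by
  intro n
  induction n with
  | zero => intro x; simp [valB]
  | succ n ih =>
    intro x
    rw [valB_succ]
    have h1 := ih (fun i : Fin n => x i.succ)
    have h2 : (x 0 : ℕ) < 2 := (x 0).isLt
    have h3 : (2:ℕ)^(n+1) = 2^n + 2^n := by ring
    nlinarith [h1, h2, h3]

lemma pc_valB : ∀ (n : ℕ) (x : Fin n → Fin 2), pc (valB x) = ∑ i, (x i : ℕ) := by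
  intro n
  induction n with
  | zero => intro x; simp [valB, (pc_eq_zero 0).mpr rfl]
  | succ n ih =>
    intro x
    rw [valB_succ, pc_mul_pow_add n _ _ (valB_lt n _), ih, Fin.sum_univ_succ,
      pc_small _ (x 0).isLt]

lemma valB_inj : ∀ (n : ℕ), Function.Injective (valB (n := n)) := by
  intro n
  induction n with
  | zero => intro x y _; funext i; exact i.elim0
  | succ n ih =>
    intro x y h
    rw [valB_succ, valB_succ] at h
    have h1 := valB_lt n (fun i : Fin n => x i.succ)
    have h2 := valB_lt n (fun i : Fin n => y i.succ)
    have h3 : (x 0 : ℕ) < 2 := (x 0).isLt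
    have h4 : (y 0 : ℕ) < 2 := (y 0).isLt
    have key : (x 0 : ℕ) = (y 0 : ℕ) ∧
        valB (fun i : Fin n => x i.succ) = valB (fun i : Fin n => y i.succ) := by
      have hu2 : (x 0:ℕ) = 0 ∨ (x 0:ℕ) = 1 := by omega
      have hv2 : (y 0:ℕ) = 0 ∨ (y 0:ℕ) = 1 := by omega
      rcases hu2 with h5|h5 <;> rcases hv2 with h6|h6 <;> rw [h5, h6] at h <;>
        exact ⟨by omega, by omega⟩
    obtain ⟨hx0, htail⟩ := key
    have htl := ih htail
    funext i
    refine Fin.cases ?_ ?_ i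
    · exact Fin.val_injective hx0
    · intro j
      exact congrFun htl j

lemma valB_image (n : ℕ) :
    (Finset.univ : Finset (Fin n → Fin 2)).image valB = Finset.range (2^n) := by
  apply Finset.eq_of_subset_of_card_le
  · intro v hv
    simp only [Finset.mem_image] at hv
    obtain ⟨x, _, rfl⟩ := hv
    exact Finset.mem_range.mpr (valB_lt n x)
  · rw [Finset.card_range, Finset.card_image_of_injective _ (valB_inj n), Finset.card_univ]
    simp

lemma card_filter_valB (n : ℕ) (p : ℕ → Prop) [DecidablePred p] :
    (Finset.univ.filter (fun x : Fin n → Fin 2 => p (valB x))).card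
      = ((Finset.range (2^n)).filter p).card := by
  rw [← Finset.card_image_of_injective (Finset.univ.filter (fun x : Fin n → Fin 2 => p (valB x))) (valB_inj n)]
  congr 1
  rw [← valB_image n, Finset.filter_image]


lemma bridgeL (n k a d : ℕ) (ha : a + k ≤ 2 ^ n) :
    (Finset.univ.filter
      (fun x : Fin n → Fin 2 => (a ≤ valB x ∧ valB x < a + k) ∧ (∑ i, (x i : ℕ)) ≤ d)).card
      = cnt a k d := by
  have e1 : (Finset.univ.filter
      (fun x : Fin n → Fin 2 => (a ≤ valB x ∧ valB x < a + k) ∧ (∑ i, (x i : ℕ)) ≤ d))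
      = (Finset.univ.filter
      (fun x : Fin n → Fin 2 => (a ≤ valB x ∧ valB x < a + k) ∧ pc (valB x) ≤ d)) := by
    apply Finset.filter_congr
    intro x _
    rw [pc_valB]
  rw [e1, card_filter_valB n (fun v => (a ≤ v ∧ v < a + k) ∧ pc v ≤ d), cnt]
  congr 1
  ext v
  simp only [Finset.mem_filter, Finset.mem_range, Finset.mem_Ico]
  constructor
  · rintro ⟨h1, h2, h3⟩; exact ⟨h2, h3⟩
  · rintro ⟨h2, h3⟩; exact ⟨by omega, h2, h3⟩

lemma bridgeR (n k d : ℕ) (hk : k ≤ 2 ^ n) :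
    (Finset.univ.filter
      (fun x : Fin n → Fin 2 => valB x < k ∧ (∑ i, (x i : ℕ)) ≤ d - 1)).card
      = cnt 0 k (d-1) := by
  have e1 : (Finset.univ.filter
      (fun x : Fin n → Fin 2 => valB x < k ∧ (∑ i, (x i : ℕ)) ≤ d - 1))
      = (Finset.univ.filter
      (fun x : Fin n → Fin 2 => valB x < k ∧ pc (valB x) ≤ d - 1)) := by
    apply Finset.filter_congr
    intro x _
    rw [pc_valB]
  rw [e1, card_filter_valB n (fun v => v < k ∧ pc v ≤ d - 1), cnt]
  congr 1
  ext v
  simp only [Finset.mem_filter, Finset.mem_range, Finset.mem_Ico]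
  constructor
  · rintro ⟨h1, h2, h3⟩; exact ⟨⟨by omega, by omega⟩, h3⟩
  · rintro ⟨⟨_, h2⟩, h3⟩; exact ⟨by omega, by omega, h3⟩

/-- If `S ⊆ {0,1}^n` is a contiguous set of size `k` disjoint from the set `M(k)`
of the `k` lexicographically smallest strings, then the number of strings of
Hamming weight `≤ d − 1` in `M(k)` is at least the number of strings of
Hamming weight `≤ d` in `S`. -/
theorem stmt6 (n k d a : ℕ) (hk : k ≤ 2 ^ n) (ha : a + k ≤ 2 ^ n)
    (S : Finset (Fin n → Fin 2))
    (hS : S = Finset.univ.filter (fun x => a ≤ valB x ∧ valB x < a + k))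
    (hdisj : Disjoint S (Finset.univ.filter (fun x : Fin n → Fin 2 => valB x < k))) :
    (S.filter (fun x => (∑ i, (x i : ℕ)) ≤ d)).card ≤
      ((Finset.univ.filter (fun x : Fin n → Fin 2 => valB x < k)).filter
        (fun x => (∑ i, (x i : ℕ)) ≤ d - 1)).card := by
  subst hS
  rw [Finset.filter_filter, Finset.filter_filter]
  have hka : k = 0 ∨ (1 ≤ k ∧ k ≤ a) := by
    rcases Nat.eq_zero_or_pos k with rfl | hk1
    · exact Or.inl rfl
    refine Or.inr ⟨hk1, ?_⟩
    by_contra hlt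
    push_neg at hlt
    have hmem : a ∈ Finset.range (2^n) := Finset.mem_range.mpr (by omega)
    rw [← valB_image n] at hmem
    obtain ⟨x, -, hx⟩ := Finset.mem_image.mp hmem
    have hxS : x ∈ Finset.univ.filter (fun x => a ≤ valB x ∧ valB x < a + k) := by
      simp only [Finset.mem_filter, Finset.mem_univ, true_and, hx]
      omega
    have hxM : x ∈ Finset.univ.filter (fun x : Fin n → Fin 2 => valB x < k) := by
      simp only [Finset.mem_filter, Finset.mem_univ, true_and, hx]
      omega
    exact Finset.disjoint_left.mp hdisj hxS hxM
  clear hdisj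
  rw [bridgeL n k a d ha, bridgeR n k d hk]
  rcases hka with rfl | ⟨hk1, hka⟩
  · have : cnt a 0 d = 0 := by simp [cnt]
    rw [this]; exact Nat.zero_le _
  rcases Nat.eq_zero_or_pos d with rfl | hd1
  · rw [cnt_d0 a k (by omega)]; exact Nat.zero_le _
  have hd : d = (d - 1) + 1 := by omega
  rw [hd]
  have h9 : d - 1 + 1 - 1 = d - 1 := by omega
  rw [h9]
  exact Tmain n a k (d-1) hka ha
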